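/- If a finite tree T with p ≥ 2 vertices, q = p − 1 edges and bipartition (X, Y) admits a set-ordered odd-graceful labelling with respect to (X, Y), then T admits a set-ordered graceful labelling with respect to (X, Y). -/
import Mathlib


/-- The induced edge label `|f u - f v|` for a vertex labelling `f`. -/
def elabel {V : Type*} (f : V → ℕ) (u v : V) : ℕ :=
  max (f u) (f v) - min (f u) (f v)

/-- `(X, Y)` is a bipartition of the graph `G`: the two parts cover all vertices,
are disjoint, and every edge joins a vertex of `X` to a vertex of `Y`. -/
def IsBipartitionOf {V : Type*} (G : SimpleGraph V) (X Y : Finset V) : Prop :=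
  (∀ v : V, v ∈ X ∨ v ∈ Y) ∧ (∀ v : V, ¬(v ∈ X ∧ v ∈ Y)) ∧
    ∀ ⦃u v : V⦄, G.Adj u v → (u ∈ X ∧ v ∈ Y) ∨ (u ∈ Y ∧ v ∈ X)

/-- `f` is a set-ordered graceful labelling of `G` (with `q` edges) with respect to the
bipartition `(X, Y)`: `f` is injective into `{0,…,q}`, the induced edge labels
`|f u - f v|` are pairwise distinct and form exactly `{1,…,q}`, and every label on `X`
is smaller than every label on `Y`. -/
def IsSetOrderedGraceful {V : Type*} (G : SimpleGraph V) (X Y : Finset V) (q : ℕ)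
    (f : V → ℕ) : Prop :=
  Function.Injective f ∧ (∀ v : V, f v ≤ q) ∧
    (∀ u v u' v' : V, G.Adj u v → G.Adj u' v' →
      elabel f u v = elabel f u' v' → s(u, v) = s(u', v')) ∧
    (∀ u v : V, G.Adj u v → 1 ≤ elabel f u v ∧ elabel f u v ≤ q) ∧
    (∀ m : ℕ, 1 ≤ m → m ≤ q → ∃ u v : V, G.Adj u v ∧ elabel f u v = m) ∧
    (∀ x ∈ X, ∀ y ∈ Y, f x < f y)

/-- `f` is a set-ordered odd-graceful labelling of `G` (with `q` edges) with respect to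
the bipartition `(X, Y)`: `f` is injective into `{0,…,2q-1}`, the induced edge labels
`|f u - f v|` are pairwise distinct and form exactly the odd numbers `{1,3,…,2q-1}`,
and every label on `X` is smaller than every label on `Y`. -/
def IsSetOrderedOddGraceful {V : Type*} (G : SimpleGraph V) (X Y : Finset V) (q : ℕ)
    (f : V → ℕ) : Prop :=
  Function.Injective f ∧ (∀ v : V, f v ≤ 2 * q - 1) ∧
    (∀ u v u' v' : V, G.Adj u v → G.Adj u' v' →
      elabel f u v = elabel f u' v' → s(u, v) = s(u', v')) ∧
    (∀ u v : V, G.Adj u v → Odd (elabel f u v) ∧ elabel f u v ≤ 2 * q - 1) ∧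
    (∀ m : ℕ, Odd m → m ≤ 2 * q - 1 → ∃ u v : V, G.Adj u v ∧ elabel f u v = m) ∧
    (∀ x ∈ X, ∀ y ∈ Y, f x < f y)

/-- A finite tree with `p ≥ 2` vertices and `q = p - 1` edges admitting a set-ordered
odd-graceful labelling with respect to a bipartition `(X, Y)` admits a set-ordered
graceful labelling with respect to `(X, Y)`. -/
theorem setOrderedOddGraceful_to_setOrderedGraceful {V : Type*} [Fintype V] [DecidableEq V]
    (G : SimpleGraph V) (hT : G.IsTree)
    (p : ℕ) (hp : Fintype.card V = p) (hp2 : 2 ≤ p)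
    (X Y : Finset V) (hbip : IsBipartitionOf G X Y)
    (f : V → ℕ) (hf : IsSetOrderedOddGraceful G X Y (p - 1) f) :
    ∃ g : V → ℕ, IsSetOrderedGraceful G X Y (p - 1) g := by
  obtain ⟨finj, fbd, funiq, fedge, fsurj, ford⟩ := hf
  obtain ⟨hcov, hdisj, hadjXY⟩ := hbip
  set q := p - 1 with hq
  have hq1 : 1 ≤ q := by omega
  -- labels have opposite parity across every edge
  have hedgepar : ∀ u v : V, G.Adj u v → f u % 2 ≠ f v % 2 := by
    intro u v huv
    obtain ⟨k, hk⟩ := (fedge u v huv).1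
    unfold elabel at hk
    rcases Nat.le_total (f u) (f v) with h | h
    · rw [max_eq_right h, min_eq_left h] at hk; omega
    · rw [max_eq_left h, min_eq_right h] at hk; omega
  -- the "parity xor side" function is constant across edges
  have heAdj : ∀ u v : V, G.Adj u v →
      (f u + (if u ∈ X then 1 else 0)) % 2 = (f v + (if v ∈ X then 1 else 0)) % 2 := by
    intro u v huv
    have hpar := hedgepar u v huv
    rcases hadjXY huv with ⟨hu, hv⟩ | ⟨hu, hv⟩
    · have hv' : v ∉ X := fun h => hdisj v ⟨h, hv⟩
      rw [if_pos hu, if_neg hv']; omega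
    · have hu' : u ∉ X := fun h => hdisj u ⟨h, hu⟩
      rw [if_neg hu', if_pos hv]; omega
  -- hence constant along walks, hence constant (tree is connected)
  have hwalk : ∀ u v : V, G.Walk u v →
      (f u + (if u ∈ X then 1 else 0)) % 2 = (f v + (if v ∈ X then 1 else 0)) % 2 := by
    intro u v w
    induction w with
    | nil => rfl
    | cons h w ih => exact (heAdj _ _ h).trans ih
  have hconst : ∀ u v : V,
      (f u + (if u ∈ X then 1 else 0)) % 2 = (f v + (if v ∈ X then 1 else 0)) % 2 := by
    intro u v
    obtain ⟨w⟩ := hT.isConnected.preconnected u v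
    exact hwalk u v w
  have hXX : ∀ x ∈ X, ∀ x' ∈ X, f x % 2 = f x' % 2 := by
    intro x hx x' hx'
    have h := hconst x x'
    rw [if_pos hx, if_pos hx'] at h; omega
  have hYY : ∀ y ∈ Y, ∀ y' ∈ Y, f y % 2 = f y' % 2 := by
    intro y hy y' hy'
    have hy1 : y ∉ X := fun h => hdisj y ⟨h, hy⟩
    have hy2 : y' ∉ X := fun h => hdisj y' ⟨h, hy'⟩
    have h := hconst y y'
    rw [if_neg hy1, if_neg hy2] at h; omega
  have hXY : ∀ x ∈ X, ∀ y ∈ Y, f x % 2 ≠ f y % 2 := by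
    intro x hx y hy
    have hy1 : y ∉ X := fun h => hdisj y ⟨h, hy⟩
    have h := hconst x y
    rw [if_pos hx, if_neg hy1] at h; omega
  -- the new labelling
  set g : V → ℕ := fun v => if v ∈ X then f v / 2 else (f v + 1) / 2 with hgdef
  have hgX : ∀ x ∈ X, g x = f x / 2 := by
    intro x hx; simp only [hgdef, if_pos hx]
  have hgY : ∀ y ∈ Y, g y = (f y + 1) / 2 := by
    intro y hy
    have hy1 : y ∉ X := fun h => hdisj y ⟨h, hy⟩
    simp only [hgdef, if_neg hy1]
  have hgord : ∀ x ∈ X, ∀ y ∈ Y, g x < g y := by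
    intro x hx y hy
    have h1 := ford x hx y hy
    have h2 := hXY x hx y hy
    rw [hgX x hx, hgY y hy]; omega
  have helab_comm : ∀ (h : V → ℕ) (u v : V), elabel h u v = elabel h v u := by
    intro h u v; unfold elabel; rw [max_comm, min_comm]
  -- edge label relation
  have hrelXY : ∀ x ∈ X, ∀ y ∈ Y, G.Adj x y →
      elabel f x y = 2 * elabel g x y - 1 ∧ 1 ≤ elabel g x y := by
    intro x hx y hy hadj
    have h1 := ford x hx y hy
    obtain ⟨k, hk⟩ := (fedge x y hadj).1
    have h3 := hgord x hx y hy
    have e1 : elabel f x y = f y - f x := by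
      unfold elabel; rw [max_eq_right h1.le, min_eq_left h1.le]
    have e2 : elabel g x y = g y - g x := by
      unfold elabel; rw [max_eq_right h3.le, min_eq_left h3.le]
    rw [e1] at hk
    have h2 := hXY x hx y hy
    rw [e1, e2, hgX x hx, hgY y hy]
    rw [hgX x hx, hgY y hy] at h3
    constructor <;> omega
  have hrel : ∀ u v : V, G.Adj u v →
      elabel f u v = 2 * elabel g u v - 1 ∧ 1 ≤ elabel g u v := by
    intro u v hadj
    rcases hadjXY hadj with ⟨hu, hv⟩ | ⟨hu, hv⟩
    · exact hrelXY u hu v hv hadj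
    · rw [helab_comm f, helab_comm g]
      exact hrelXY v hv u hu hadj.symm
  refine ⟨g, ?_, ?_, ?_, ?_, ?_, hgord⟩
  · -- injectivity
    intro u v huv
    by_contra hne
    rcases hcov u with hu | hu <;> rcases hcov v with hv | hv
    · have hpar := hXX u hu v hv
      rw [hgX u hu, hgX v hv] at huv
      exact hne (finj (by omega))
    · exact absurd huv (Nat.ne_of_lt (hgord u hu v hv))
    · exact absurd huv.symm (Nat.ne_of_lt (hgord v hv u hu))
    · have hpar := hYY u hu v hv
      rw [hgY u hu, hgY v hv] at huv
      exact hne (finj (by omega))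
  · -- bound
    intro v
    have hb := fbd v
    rcases hcov v with hv | hv
    · rw [hgX v hv]; omega
    · rw [hgY v hv]; omega
  · -- distinct edge labels
    intro u v u' v' h h' heq
    have r := hrel u v h
    have r' := hrel u' v' h'
    exact funiq u v u' v' h h' (by omega)
  · -- edge label bounds
    intro u v h
    have r := hrel u v h
    have hb := (fedge u v h).2
    constructor <;> omega
  · -- surjectivity
    intro m hm1 hmq
    obtain ⟨u, v, hadj, he⟩ := fsurj (2 * m - 1) ⟨m - 1, by omega⟩ (by omega)
    have r := hrel u v hadj
    exact ⟨u, v, hadj, by omega⟩
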